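/- Let ν_0 : ℤ^d → [0,∞) be an initial mass configuration. If T_1 : [0,τ_1] → ℤ^d and T_2 : [0,τ_2] → ℤ^d are both complete legal toppling functions for ν_0, then for every x ∈ ℤ^d, Leb(T_1^{−1}(x)) = Leb(T_2^{−1}(x)). In particular τ_1 = τ_2 and the final mass configurations coincide. -/
import Mathlib


open MeasureTheory Metric Filter
open scoped ENNReal

noncomputable section

/-- The lattice `ℤ^d`. -/
abbrev Pos (d : ℕ) := Fin d → ℤ

/-! ### The divisible sandpile (continuous-time toppling formulation) -/

/-- The sum of `f` over the `2d` lattice neighbors of `x`. -/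
def nbrSum (d : ℕ) (f : Pos d → ℝ) (x : Pos d) : ℝ :=
  ∑ i : Fin d, (f (Function.update x i (x i + 1)) + f (Function.update x i (x i - 1)))

/-- The discrete Laplacian `Δf(x) = (1/2d) Σ_{y∼x} f(y) − f(x)` on `ℤ^d`. -/
def discLap (d : ℕ) (f : Pos d → ℝ) (x : Pos d) : ℝ := nbrSum d f x / (2 * d) - f x

/-- The odometer at time `t` of a toppling function `T`: `u_t(x) = Leb(T⁻¹(x) ∩ [0,t])`. -/
def odo (d : ℕ) (T : ℝ → Pos d) (t : ℝ) (x : Pos d) : ℝ :=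
  (volume (T ⁻¹' {x} ∩ Set.Icc 0 t)).toReal

/-- The mass at time `t`: `ν_t = ν_0 + Δ u_t`. -/
def massAt (d : ℕ) (ν0 : Pos d → ℝ) (T : ℝ → Pos d) (t : ℝ) (x : Pos d) : ℝ :=
  ν0 x + discLap d (odo d T t) x

/-- `T : [0,τ] → ℤ^d` has only finitely many discontinuities in `[0,t]` for every `t < τ`. -/
def IsToppling (d : ℕ) (T : ℝ → Pos d) (τ : ℝ) : Prop :=
  ∀ t : ℝ, t < τ → {s : ℝ | s ∈ Set.Icc 0 t ∧ ¬ ContinuousAt T s}.Finite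

/-- `T` is a legal toppling function for `ν_0` on `[0,τ]`: only finitely many discontinuities
in `[0,t]` for `t < τ`, and `ν_t(T(t)) ≥ 1` for all `t ∈ [0,τ]`. -/
def IsLegalToppling (d : ℕ) (ν0 : Pos d → ℝ) (T : ℝ → Pos d) (τ : ℝ) : Prop :=
  IsToppling d T τ ∧ ∀ t ∈ Set.Icc (0 : ℝ) τ, 1 ≤ massAt d ν0 T t (T t)

/-- `T` is complete: the final mass satisfies `ν_τ ≤ 1` everywhere. -/
def IsCompleteToppling (d : ℕ) (ν0 : Pos d → ℝ) (T : ℝ → Pos d) (τ : ℝ) : Prop :=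
  ∀ x, massAt d ν0 T τ x ≤ 1

/-- `D` is the domain of fully occupied sites (`ν = 1`) for the divisible sandpile started
from the mass configuration `ν_0`, i.e. the final state of some complete legal toppling. -/
def SandpileDomain (d : ℕ) (ν0 : Pos d → ℝ) (D : Set (Pos d)) : Prop :=
  ∃ (T : ℝ → Pos d) (τ : ℝ), 0 ≤ τ ∧ IsLegalToppling d ν0 T τ ∧ IsCompleteToppling d ν0 T τ ∧
    D = {x | massAt d ν0 T τ x = 1}

lemma odo_vol_ne_top (d : ℕ) (T : ℝ → Pos d) (t : ℝ) (x : Pos d) :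
    volume (T ⁻¹' {x} ∩ Set.Icc 0 t) ≠ ∞ := by
  refine ne_top_of_le_ne_top ?_ (measure_mono Set.inter_subset_right)
  simp [Real.volume_Icc]

lemma odo_nonneg (d T t x) : 0 ≤ odo d T t x := ENNReal.toReal_nonneg

lemma odo_zero (d T x) : odo d T 0 x = 0 := by
  have h1 : T ⁻¹' {x} ∩ Set.Icc 0 0 ⊆ {(0:ℝ)} := by
    rw [Set.Icc_self]; exact Set.inter_subset_right
  have : volume (T ⁻¹' {x} ∩ Set.Icc 0 0) = 0 :=
    measure_mono_null h1 (measure_singleton 0)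
  rw [odo, this]; simp

lemma odo_mono (d T x) {s t : ℝ} (h : s ≤ t) : odo d T s x ≤ odo d T t x := by
  refine ENNReal.toReal_mono (odo_vol_ne_top d T t x) (measure_mono ?_)
  exact Set.inter_subset_inter_right _ (Set.Icc_subset_Icc_right h)

lemma odo_lip (d T x) {s t : ℝ} (h0 : 0 ≤ s) (h : s ≤ t) :
    odo d T t x ≤ odo d T s x + (t - s) := by
  have hsub : T ⁻¹' {x} ∩ Set.Icc 0 t ⊆ (T ⁻¹' {x} ∩ Set.Icc 0 s) ∪ Set.Ioc s t := by
    rintro r ⟨hr, hr0, hrt⟩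
    rcases le_or_gt r s with h' | h'
    · exact Or.inl ⟨hr, hr0, h'⟩
    · exact Or.inr ⟨h', hrt⟩
  have hle : volume (T ⁻¹' {x} ∩ Set.Icc 0 t) ≤
      volume (T ⁻¹' {x} ∩ Set.Icc 0 s) + volume (Set.Ioc s t) :=
    (measure_mono hsub).trans (measure_union_le _ _)
  calc odo d T t x ≤ ((volume (T ⁻¹' {x} ∩ Set.Icc 0 s) + volume (Set.Ioc s t))).toReal := by
        refine ENNReal.toReal_mono ?_ hle
        simp [ENNReal.add_ne_top, odo_vol_ne_top, Real.volume_Ioc]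
    _ = odo d T s x + (t - s) := by
        rw [ENNReal.toReal_add (odo_vol_ne_top d T s x) (by simp [Real.volume_Ioc])]
        simp [odo, Real.volume_Ioc, ENNReal.toReal_ofReal (sub_nonneg.2 h)]

lemma odo_incr (d T x) {s t : ℝ} (h0 : 0 ≤ s) (h : s < t)
    (hT : Set.Ioc s t ⊆ T ⁻¹' {x}) :
    odo d T t x = odo d T s x + (t - s) := by
  have hset : T ⁻¹' {x} ∩ Set.Icc 0 t = (T ⁻¹' {x} ∩ Set.Icc 0 s) ∪ Set.Ioc s t := by
    ext r
    constructor
    · rintro ⟨hr, hr0, hrt⟩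
      rcases le_or_gt r s with h' | h'
      · exact Or.inl ⟨hr, hr0, h'⟩
      · exact Or.inr ⟨h', hrt⟩
    · rintro (⟨hr, hr0, hrs⟩ | hr)
      · exact ⟨hr, hr0, hrs.trans h.le⟩
      · exact ⟨hT hr, h0.trans hr.1.le, hr.2⟩
  have hdisj : Disjoint (T ⁻¹' {x} ∩ Set.Icc 0 s) (Set.Ioc s t) := by
    refine Set.disjoint_left.2 ?_
    rintro r ⟨_, _, hrs⟩ ⟨hr, _⟩
    exact absurd hrs (not_le.2 hr)
  rw [odo, hset, measure_union hdisj measurableSet_Ioc,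
    ENNReal.toReal_add (odo_vol_ne_top d T s x) (by simp [Real.volume_Ioc])]
  simp [odo, Real.volume_Ioc, ENNReal.toReal_ofReal (sub_nonneg.2 h.le)]

lemma odo_const (d T x) {s t : ℝ} (h : s ≤ t) {x₀ : Pos d}
    (hT : Set.Ioc s t ⊆ T ⁻¹' {x₀}) (hx : x ≠ x₀) :
    odo d T t x = odo d T s x := by
  unfold odo
  have hseteq : T ⁻¹' {x} ∩ Set.Icc 0 t = T ⁻¹' {x} ∩ Set.Icc 0 s := by
    ext r
    constructor
    · rintro ⟨hr, hr0, hrt⟩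
      refine ⟨hr, hr0, ?_⟩
      by_contra h'
      have : r ∈ Set.Ioc s t := ⟨not_le.1 h', hrt⟩
      exact hx (by rw [← Set.mem_singleton_iff.1 hr, hT this])
    · rintro ⟨hr, hr0, hrs⟩
      exact ⟨hr, hr0, hrs.trans h⟩
  rw [hseteq]

-- T continuous on open interval into discrete ⇒ constant
lemma const_of_cont (d : ℕ) (T : ℝ → Pos d) {a b : ℝ}
    (h : ∀ s ∈ Set.Ioo a b, ContinuousAt T s) :
    ∀ s ∈ Set.Ioo a b, ∀ s' ∈ Set.Ioo a b, T s = T s' := by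
  intro s hs s' hs'
  have hco : ContinuousOn T (Set.Ioo a b) := fun r hr => (h r hr).continuousWithinAt
  have hpre : IsPreconnected (T '' Set.Ioo a b) := (isPreconnected_Ioo).image T hco
  exact hpre.subsingleton ⟨s, hs, rfl⟩ ⟨s', hs', rfl⟩

lemma discont_countable (d : ℕ) (T : ℝ → Pos d) (τ : ℝ) (hT : IsToppling d T τ) :
    {s : ℝ | s ∈ Set.Ico 0 τ ∧ ¬ ContinuousAt T s}.Countable := by
  have hsub : {s : ℝ | s ∈ Set.Ico 0 τ ∧ ¬ ContinuousAt T s} ⊆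
      ⋃ q : ℚ, {s : ℝ | ((q:ℝ) < τ ∧ s ∈ Set.Icc 0 (q:ℝ)) ∧ ¬ ContinuousAt T s} := by
    rintro s ⟨⟨hs0, hsτ⟩, hc⟩
    obtain ⟨q, hq1, hq2⟩ := exists_rat_btwn hsτ
    exact Set.mem_iUnion.2 ⟨q, ⟨hq2, hs0, hq1.le⟩, hc⟩
  refine Set.Countable.mono hsub (Set.countable_iUnion fun q => ?_)
  by_cases hq : (q:ℝ) < τ
  · refine Set.Finite.countable (Set.Finite.subset (hT q hq) ?_)
    rintro s ⟨⟨_, hs⟩, hc⟩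
    exact ⟨hs, hc⟩
  · convert Set.countable_empty
    ext s; simp only [Set.mem_setOf_eq, Set.mem_empty_iff_false, iff_false]
    rintro ⟨⟨h,_⟩,_⟩; exact hq h

lemma preimage_measurable (d : ℕ) (T : ℝ → Pos d) (τ : ℝ) (hT : IsToppling d T τ)
    (x : Pos d) : MeasurableSet (T ⁻¹' {x} ∩ Set.Ico 0 τ) := by
  set E := {s : ℝ | s ∈ Set.Ico 0 τ ∧ ¬ ContinuousAt T s} with hE
  have hEc : E.Countable := discont_countable d T τ hT
  set A := T ⁻¹' {x} ∩ Set.Ico 0 τ ∩ Eᶜ with hA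
  have hopen : ∀ s ∈ A, ∃ U : Set ℝ, IsOpen U ∧ s ∈ U ∧ U ⊆ T ⁻¹' {x} := by
    rintro s ⟨⟨hsx, hsI⟩, hsE⟩
    have hcont : ContinuousAt T s := by
      by_contra hc
      exact hsE ⟨hsI, hc⟩
    have hx : T s = x := hsx
    have hnhds : T ⁻¹' {x} ∈ nhds s := by
      have : {x} ∈ nhds (T s) := by
        rw [hx]; exact IsOpen.mem_nhds (isOpen_discrete _) rfl
      exact hcont.preimage_mem_nhds this
    obtain ⟨U, hU1, hU2, hU3⟩ := _root_.mem_nhds_iff.1 hnhds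
    exact ⟨U, hU2, hU3, hU1⟩
  choose! U hU1 hU2 hU3 using hopen
  set V : Set ℝ := ⋃ s ∈ A, U s with hV
  have hVopen : IsOpen V := isOpen_biUnion fun s hs => hU1 s hs
  have hAeq : A = V ∩ Set.Ico 0 τ ∩ Eᶜ := by
    apply Set.Subset.antisymm
    · rintro s hs
      exact ⟨⟨Set.mem_biUnion hs (hU2 s hs), hs.1.2⟩, hs.2⟩
    · rintro s ⟨⟨hsV, hsI⟩, hsE⟩
      obtain ⟨r, hr, hsr⟩ := Set.mem_iUnion₂.1 hsV
      exact ⟨⟨hU3 r hr hsr, hsI⟩, hsE⟩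
  have hAm : MeasurableSet A := by
    rw [hAeq]
    exact (hVopen.measurableSet.inter measurableSet_Ico).inter
      hEc.measurableSet.compl
  have hsplit : T ⁻¹' {x} ∩ Set.Ico 0 τ =
      A ∪ (T ⁻¹' {x} ∩ Set.Ico 0 τ ∩ E) := by
    rw [hA, ← Set.inter_union_distrib_left, Set.compl_union_self, Set.inter_univ]
  rw [hsplit]
  exact hAm.union ((hEc.mono Set.inter_subset_right).measurableSet)

lemma vol_Icc_eq_Ico (d : ℕ) (T : ℝ → Pos d) (τ : ℝ) (x : Pos d) :
    volume (T ⁻¹' {x} ∩ Set.Icc 0 τ) = volume (T ⁻¹' {x} ∩ Set.Ico 0 τ) := by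
  refine le_antisymm ?_ (measure_mono (Set.inter_subset_inter_right _ Set.Ico_subset_Icc_self))
  have hsub : T ⁻¹' {x} ∩ Set.Icc 0 τ ⊆ (T ⁻¹' {x} ∩ Set.Ico 0 τ) ∪ {τ} := by
    rintro s ⟨hs, hs0, hsτ⟩
    rcases lt_or_eq_of_le hsτ with h | h
    · exact Or.inl ⟨hs, hs0, h⟩
    · exact Or.inr h
  calc volume (T ⁻¹' {x} ∩ Set.Icc 0 τ)
      ≤ volume ((T ⁻¹' {x} ∩ Set.Ico 0 τ) ∪ {τ}) := measure_mono hsub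
    _ ≤ volume (T ⁻¹' {x} ∩ Set.Ico 0 τ) + volume ({τ} : Set ℝ) := measure_union_le _ _
    _ = volume (T ⁻¹' {x} ∩ Set.Ico 0 τ) := by simp

lemma sum_vol (d : ℕ) (T : ℝ → Pos d) (τ : ℝ) (hτ : 0 ≤ τ) (hT : IsToppling d T τ) :
    ∑' x : Pos d, volume (T ⁻¹' {x} ∩ Set.Icc 0 τ) = ENNReal.ofReal τ := by
  have h1 : ∀ x : Pos d, volume (T ⁻¹' {x} ∩ Set.Icc 0 τ) =
      volume (T ⁻¹' {x} ∩ Set.Ico 0 τ) := vol_Icc_eq_Ico d T τ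
  simp_rw [h1]
  have hdisj : Pairwise (Function.onFun Disjoint
      fun x : Pos d => T ⁻¹' {x} ∩ Set.Ico 0 τ) := by
    intro x y hxy
    refine Set.disjoint_left.2 ?_
    rintro s ⟨hsx, _⟩ ⟨hsy, _⟩
    exact hxy (hsx.symm.trans hsy)
  rw [← measure_iUnion hdisj (fun x => preimage_measurable d T τ hT x)]
  have : (⋃ x : Pos d, T ⁻¹' {x} ∩ Set.Ico 0 τ) = Set.Ico 0 τ := by
    apply Set.Subset.antisymm
    · exact Set.iUnion_subset fun x => Set.inter_subset_right
    · intro s hs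
      exact Set.mem_iUnion.2 ⟨T s, rfl, hs⟩
  rw [this, Real.volume_Ico, sub_zero]

lemma nbr_ne_self (d : ℕ) (x : Pos d) (i : Fin d) :
    Function.update x i (x i + 1) ≠ x ∧ Function.update x i (x i - 1) ≠ x := by
  constructor <;> intro h <;> have := congrFun h i <;> simp at this

lemma nbrSum_mono (d : ℕ) {f g : Pos d → ℝ} (h : ∀ y, f y ≤ g y) (x : Pos d) :
    nbrSum d f x ≤ nbrSum d g x :=
  Finset.sum_le_sum fun i _ => add_le_add (h _) (h _)

lemma nbrSum_congr (d : ℕ) {f g : Pos d → ℝ} (x : Pos d) (h : ∀ y ≠ x, f y = g y) :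
    nbrSum d f x = nbrSum d g x :=
  Finset.sum_congr rfl fun i _ => by
    rw [h _ (nbr_ne_self d x i).1, h _ (nbr_ne_self d x i).2]

lemma odo_le (d : ℕ) (hd : 1 ≤ d) (ν0 : Pos d → ℝ)
    (T₁ T₂ : ℝ → Pos d) (τ₁ τ₂ : ℝ) (hτ₁ : 0 ≤ τ₁) (hτ₂ : 0 ≤ τ₂)
    (hleg₁ : IsLegalToppling d ν0 T₁ τ₁) (hcom₂ : IsCompleteToppling d ν0 T₂ τ₂) :
    ∀ x, odo d T₁ τ₁ x ≤ odo d T₂ τ₂ x := by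
  set u : Pos d → ℝ := odo d T₂ τ₂ with hu
  set S : Set ℝ := {t : ℝ | t ∈ Set.Icc 0 τ₁ ∧ ∀ x, odo d T₁ t x ≤ u x} with hS
  have h0S : (0:ℝ) ∈ S := ⟨⟨le_refl 0, hτ₁⟩, fun x => by
    rw [odo_zero]; exact odo_nonneg d T₂ τ₂ x⟩
  have hne : S.Nonempty := ⟨0, h0S⟩
  have hbdd : BddAbove S := ⟨τ₁, fun t ht => ht.1.2⟩
  set c : ℝ := sSup S with hc
  have hc0 : 0 ≤ c := le_csSup hbdd h0S
  have hc1 : c ≤ τ₁ := csSup_le hne fun t ht => ht.1.2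
  have hmem : c ∈ S := by
    refine ⟨⟨hc0, hc1⟩, fun x => ?_⟩
    refine le_of_forall_pos_le_add fun ε hε => ?_
    obtain ⟨s, hsS, hs⟩ := exists_lt_of_lt_csSup hne (show c - ε < c by linarith)
    have hst : s ≤ c := le_csSup hbdd hsS
    have h1 := odo_lip d T₁ x hsS.1.1 hst
    have h2 := hsS.2 x
    linarith
  have hEq : c = τ₁ := by
    by_contra hne'
    have hlt : c < τ₁ := lt_of_le_of_ne hc1 hne'
    set t' : ℝ := (c + τ₁)/2 with ht'
    have h1 : c < t' := by rw [ht']; linarith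
    have h2 : t' < τ₁ := by rw [ht']; linarith
    have hF : {s : ℝ | s ∈ Set.Icc 0 t' ∧ ¬ ContinuousAt T₁ s}.Finite := hleg₁.1 t' h2
    set Fs := {s : ℝ | s ∈ Set.Icc 0 t' ∧ ¬ ContinuousAt T₁ s} with hFs
    set G : Set ℝ := insert t' {s ∈ Fs | c < s} with hG
    have hGfin : G.Finite := (hF.subset (Set.sep_subset _ _)).insert t'
    have hGne : G.Nonempty := ⟨t', Set.mem_insert _ _⟩
    set m : ℝ := hGfin.toFinset.min' (by rwa [Set.Finite.toFinset_nonempty]) with hm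
    have hmG : m ∈ G := by
      have := hGfin.toFinset.min'_mem (by rwa [Set.Finite.toFinset_nonempty])
      rwa [Set.Finite.mem_toFinset] at this
    have hm_le : ∀ g ∈ G, m ≤ g := fun g hg =>
      Finset.min'_le _ _ ((Set.Finite.mem_toFinset _).2 hg)
    have hcm : c < m := by
      rcases hmG with h | h
      · rwa [h]
      · exact h.2
    have hmt' : m ≤ t' := hm_le t' (Set.mem_insert _ _)
    have hcont : ∀ s ∈ Set.Ioo c m, ContinuousAt T₁ s := by
      intro s hs
      by_contra hcc
      have hsF : s ∈ Fs := ⟨⟨hc0.trans hs.1.le, hs.2.le.trans hmt'⟩, hcc⟩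
      have : s ∈ G := Set.mem_insert_iff.2 (Or.inr ⟨hsF, hs.1⟩)
      exact absurd (hm_le s this) (not_le.2 hs.2)
    set t₀ : ℝ := (c + m)/2 with ht₀
    have ht₀m : t₀ ∈ Set.Ioo c m := ⟨by rw [ht₀]; linarith, by rw [ht₀]; linarith⟩
    set x₀ : Pos d := T₁ t₀ with hx₀
    have hconst : ∀ s ∈ Set.Ioo c m, T₁ s = x₀ :=
      fun s hs => const_of_cont d T₁ hcont s hs t₀ ht₀m
    have hIoc : ∀ t ∈ Set.Ioo c m, Set.Ioc c t ⊆ T₁ ⁻¹' {x₀} := by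
      intro t ht s hs
      exact Set.mem_singleton_iff.2 (hconst s ⟨hs.1, lt_of_le_of_lt hs.2 ht.2⟩)
    rcases lt_or_ge (odo d T₁ c x₀) (u x₀) with hA | hB
    · -- can still raise the odometer at x₀ without exceeding u, contradicting sSup
      set t : ℝ := min t₀ (c + (u x₀ - odo d T₁ c x₀)) with ht
      have htc : c < t := lt_min ht₀m.1 (by linarith)
      have htm : t ∈ Set.Ioo c m := ⟨htc, lt_of_le_of_lt (min_le_left _ _) ht₀m.2⟩
      have htS : t ∈ S := by
        refine ⟨⟨hc0.trans htc.le, (htm.2.trans_le hmt').le.trans h2.le⟩, fun x => ?_⟩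
        by_cases hx : x = x₀
        · rw [hx, odo_incr d T₁ x₀ hc0 htc (hIoc t htm)]
          have : t ≤ c + (u x₀ - odo d T₁ c x₀) := min_le_right _ _
          linarith
        · rw [odo_const d T₁ x htc.le (hIoc t htm) hx]
          exact hmem.2 x
      exact absurd (le_csSup hbdd htS) (not_le.2 htc)
    · -- mass at x₀ drops strictly below 1, contradicting legality
      have ht₀Icc : t₀ ∈ Set.Icc (0:ℝ) τ₁ :=
        ⟨hc0.trans ht₀m.1.le, ((ht₀m.2.trans_le hmt').le.trans h2.le)⟩
      have hlegal := hleg₁.2 t₀ ht₀Icc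
      rw [← hx₀] at hlegal
      have hodo0 : odo d T₁ t₀ x₀ = odo d T₁ c x₀ + (t₀ - c) :=
        odo_incr d T₁ x₀ hc0 ht₀m.1 (hIoc t₀ ht₀m)
      have hodoy : ∀ y ≠ x₀, odo d T₁ t₀ y = odo d T₁ c y :=
        fun y hy => odo_const d T₁ y ht₀m.1.le (hIoc t₀ ht₀m) hy
      have hnbr : nbrSum d (odo d T₁ t₀) x₀ = nbrSum d (odo d T₁ c) x₀ :=
        nbrSum_congr d x₀ hodoy
      have hnbr2 : nbrSum d (odo d T₁ c) x₀ ≤ nbrSum d u x₀ :=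
        nbrSum_mono d hmem.2 x₀
      have hden : (0:ℝ) < 2 * d := by
        have : (1:ℝ) ≤ d := by exact_mod_cast hd
        linarith
      have hdiv : nbrSum d (odo d T₁ c) x₀ / (2*d) ≤ nbrSum d u x₀ / (2*d) := by
        gcongr
      have hcomp := hcom₂ x₀
      rw [massAt, discLap] at hlegal hcomp
      rw [hnbr, hodo0] at hlegal
      rw [← hu] at hcomp
      linarith [ht₀m.1]
  intro x
  rw [← hEq]
  exact hmem.2 x


/-- **Abelian property of the divisible sandpile.**
Let `ν_0 : ℤ^d → [0,∞)` be an initial mass configuration.  If `T₁ : [0,τ₁] → ℤ^d` and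
`T₂ : [0,τ₂] → ℤ^d` are complete legal toppling functions for `ν_0`, then for every `x`,
`Leb(T₁⁻¹(x)) = Leb(T₂⁻¹(x))`; in particular `τ₁ = τ₂` and the final mass configurations
coincide. -/
theorem divisible_sandpile_abelian (d : ℕ) (hd : 1 ≤ d)
    (ν0 : Pos d → ℝ) (hν0 : ∀ x, 0 ≤ ν0 x)
    (T₁ T₂ : ℝ → Pos d) (τ₁ τ₂ : ℝ) (hτ₁ : 0 ≤ τ₁) (hτ₂ : 0 ≤ τ₂)
    (hleg₁ : IsLegalToppling d ν0 T₁ τ₁) (hcom₁ : IsCompleteToppling d ν0 T₁ τ₁)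
    (hleg₂ : IsLegalToppling d ν0 T₂ τ₂) (hcom₂ : IsCompleteToppling d ν0 T₂ τ₂) :
    (∀ x, volume (T₁ ⁻¹' {x} ∩ Set.Icc 0 τ₁) = volume (T₂ ⁻¹' {x} ∩ Set.Icc 0 τ₂)) ∧
    τ₁ = τ₂ ∧
    (∀ x, massAt d ν0 T₁ τ₁ x = massAt d ν0 T₂ τ₂ x) := by
  have key₁ := odo_le d hd ν0 T₁ T₂ τ₁ τ₂ hτ₁ hτ₂ hleg₁ hcom₂
  have key₂ := odo_le d hd ν0 T₂ T₁ τ₂ τ₁ hτ₂ hτ₁ hleg₂ hcom₁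
  have hodoeq : ∀ x, odo d T₁ τ₁ x = odo d T₂ τ₂ x :=
    fun x => le_antisymm (key₁ x) (key₂ x)
  have hvol : ∀ x, volume (T₁ ⁻¹' {x} ∩ Set.Icc 0 τ₁) =
      volume (T₂ ⁻¹' {x} ∩ Set.Icc 0 τ₂) := by
    intro x
    have h := hodoeq x
    rwa [odo, odo, ENNReal.toReal_eq_toReal_iff' (odo_vol_ne_top d T₁ τ₁ x)
      (odo_vol_ne_top d T₂ τ₂ x)] at h
  refine ⟨hvol, ?_, ?_⟩
  · have h1 : ENNReal.ofReal τ₁ = ENNReal.ofReal τ₂ := by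
      rw [← sum_vol d T₁ τ₁ hτ₁ hleg₁.1, ← sum_vol d T₂ τ₂ hτ₂ hleg₂.1]
      exact tsum_congr hvol
    exact (ENNReal.ofReal_eq_ofReal_iff hτ₁ hτ₂).1 h1
  · intro x
    have h : odo d T₁ τ₁ = odo d T₂ τ₂ := funext hodoeq
    rw [massAt, massAt, h]
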